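/- Let G = (V, E) be a Laman graph with |V| ≥ 3, let (x, y) ∈ E be an edge of G and let z ∈ V \ {x, y} be a third vertex. Let G' be the graph obtained from G by removing the edge (x, y) and adding one new vertex v together with the three edges (v, x), (v, y), and (v, z). Then G' is a Laman graph. -/

import Mathlib

/-- A Laman graph: a connected graph with `|E| = 2|V| - 3` such that every subset `W`
of at least two vertices induces at most `2|W| - 3` edges. -/
def IsLaman {V : Type*} [Fintype V] (G : SimpleGraph V) : Prop :=
  G.Connected ∧ G.edgeSet.ncard = 2 * Fintype.card V - 3 ∧
    ∀ W : Set V, 2 ≤ W.ncard →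
      {e ∈ G.edgeSet | ∀ v ∈ e, v ∈ W}.ncard ≤ 2 * W.ncard - 3

private lemma two_le_of_edge {V : Type*} [Fintype V] {G : SimpleGraph V} {W : Set V}
    (h : {e ∈ G.edgeSet | ∀ v ∈ e, v ∈ W}.Nonempty) : 2 ≤ W.ncard := by
  obtain ⟨e, heE, heW⟩ := h
  induction e using Sym2.inductionOn with
  | hf u v =>
    have hadj : G.Adj u v := heE
    have hu : u ∈ W := heW u (Sym2.mem_mk_left u v)
    have hv : v ∈ W := heW v (Sym2.mem_mk_right u v)
    have hsub : ({u, v} : Set V) ⊆ W := by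
      intro w hw
      rcases hw with rfl | hw
      · exact hu
      · exact Set.mem_singleton_iff.1 hw ▸ hv
    have := Set.ncard_le_ncard hsub W.toFinite
    rwa [Set.ncard_pair hadj.ne] at this

/-- Henneberg operation H2: removing an edge `(x, y)` of a Laman graph and adding a new
vertex joined to `x`, `y` and a third vertex `z` yields a Laman graph. -/
theorem henneberg_two
    {V : Type*} [Fintype V] [DecidableEq V]
    (G : SimpleGraph V) (hG : IsLaman G)
    (hV : 3 ≤ Fintype.card V)
    (x y z : V) (hGxy : G.Adj x y) (hzx : z ≠ x) (hzy : z ≠ y)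
    (G' : SimpleGraph (Option V))
    (hold : ∀ a b : V, G'.Adj (some a) (some b) ↔ (G.Adj a b ∧ s(a, b) ≠ s(x, y)))
    (hnew : ∀ a : V, G'.Adj none (some a) ↔ (a = x ∨ a = y ∨ a = z)) :
    IsLaman G' := by
  obtain ⟨hconn, hcount, hsparse⟩ := hG
  have hxy : x ≠ y := hGxy.ne
  have hinj : Function.Injective (Sym2.map (some : V → Option V)) :=
    Sym2.map.injective (Option.some_injective V)
  have hninj : Function.Injective (fun a : V => s((none : Option V), some a)) := by
    intro a b hab
    simp only [Sym2.eq_iff] at hab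
    rcases hab with ⟨-, h⟩ | ⟨h, -⟩
    · exact Option.some_injective V h
    · exact absurd h (by simp)
  have h3 : ({x, y, z} : Set V).ncard = 3 := by
    rw [Set.ncard_insert_of_notMem (by simp [hxy, Ne.symm hzx]) (Set.toFinite _),
      Set.ncard_pair (Ne.symm hzy)]
  -- Connectivity
  have key : ∀ a b : V, G.Adj a b → G'.Reachable (some a) (some b) := by
    intro a b hab
    by_cases h : s(a, b) = s(x, y)
    · rw [Sym2.eq_iff] at h
      have ha : G'.Adj none (some a) := (hnew a).2 (by tauto)
      have hb : G'.Adj none (some b) := (hnew b).2 (by tauto)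
      exact ha.symm.reachable.trans hb.reachable
    · exact ((hold a b).2 ⟨hab, h⟩).reachable
  have lift : ∀ a b : V, G.Reachable a b → G'.Reachable (some a) (some b) := by
    intro a b h
    rw [SimpleGraph.reachable_iff_reflTransGen] at h
    induction h with
    | refl => exact SimpleGraph.Reachable.refl _
    | tail _ h2 ih => exact ih.trans (key _ _ h2)
  have hnx : G'.Reachable none (some x) := ((hnew x).2 (Or.inl rfl)).reachable
  have reach : ∀ u : Option V, G'.Reachable none u := by
    intro u
    match u with
    | none => exact SimpleGraph.Reachable.refl _
    | some a => exact hnx.trans (lift x a (hconn.preconnected x a))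
  have hconn' : G'.Connected := by
    rw [SimpleGraph.connected_iff]
    exact ⟨fun u v => (reach u).symm.trans (reach v), ⟨none⟩⟩
  -- Edge set characterization
  have hchar : G'.edgeSet =
      Sym2.map some '' (G.edgeSet \ {s(x, y)}) ∪
        (fun a : V => s((none : Option V), some a)) '' {x, y, z} := by
    ext e
    induction e using Sym2.inductionOn with
    | hf u v =>
      constructor
      · intro he
        rw [SimpleGraph.mem_edgeSet] at he
        match u, v with
        | some a, some b =>
          obtain ⟨hab, hne⟩ := (hold a b).1 he
          exact Or.inl ⟨s(a, b), ⟨hab, hne⟩, rfl⟩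
        | none, some a =>
          exact Or.inr ⟨a, by simpa using (hnew a).1 he, rfl⟩
        | some a, none =>
          exact Or.inr ⟨a, by simpa using (hnew a).1 he.symm, Sym2.eq_swap⟩
        | none, none => exact absurd rfl he.ne
      · rintro (⟨f, hf, hfe⟩ | ⟨a, ha, hea⟩)
        · rw [← hfe]
          induction f using Sym2.inductionOn with
          | hf a b =>
            rw [Sym2.map_pair_eq, SimpleGraph.mem_edgeSet]
            exact (hold a b).2 ⟨hf.1, hf.2⟩
        · rw [← hea, SimpleGraph.mem_edgeSet]
          exact (hnew a).2 (by simpa using ha)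
  have hdisj : Disjoint (Sym2.map some '' (G.edgeSet \ {s(x, y)}))
      ((fun a : V => s((none : Option V), some a)) '' ({x, y, z} : Set V)) := by
    rw [Set.disjoint_left]
    rintro e ⟨f, -, rfl⟩ ⟨a, -, hea⟩
    induction f using Sym2.inductionOn with
    | hf u v =>
      rw [Sym2.map_pair_eq] at hea
      simp [Sym2.eq_iff] at hea
  have hcount' : G'.edgeSet.ncard = 2 * Fintype.card (Option V) - 3 := by
    rw [hchar, Set.ncard_union_eq hdisj (Set.toFinite _) (Set.toFinite _),
      Set.ncard_image_of_injective _ hinj, Set.ncard_image_of_injective _ hninj,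
      Set.ncard_diff_singleton_of_mem (by rwa [SimpleGraph.mem_edgeSet]),
      hcount, h3, Fintype.card_option]
    omega
  refine ⟨hconn', hcount', ?_⟩
  -- Sparsity
  intro W hW
  set W₀ : Set V := some ⁻¹' W with hW₀def
  by_cases hnone : (none : Option V) ∈ W
  · -- `none ∈ W`
    have hWeq : W = insert none (some '' W₀) := by
      ext u
      match u with
      | none => simp [hnone]
      | some a => simp [hW₀def]
    have hcard : W.ncard = W₀.ncard + 1 := by
      rw [hWeq, Set.ncard_insert_of_notMem (by simp) (Set.toFinite _),
        Set.ncard_image_of_injective _ (Option.some_injective V)]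
    set E₀ : Set (Sym2 V) := {e ∈ G.edgeSet | ∀ v ∈ e, v ∈ W₀} with hE₀def
    have hsub : {e ∈ G'.edgeSet | ∀ v ∈ e, v ∈ W} ⊆
        Sym2.map some '' (E₀ \ {s(x, y)}) ∪
          (fun a : V => s((none : Option V), some a)) '' (({x, y, z} : Set V) ∩ W₀) := by
      rintro e ⟨heE, heW⟩
      induction e using Sym2.inductionOn with
      | hf u v =>
        rw [SimpleGraph.mem_edgeSet] at heE
        have hu : u ∈ W := heW u (Sym2.mem_mk_left u v)
        have hv : v ∈ W := heW v (Sym2.mem_mk_right u v)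
        match u, v with
        | some a, some b =>
          obtain ⟨hab, hne⟩ := (hold a b).1 heE
          refine Or.inl ⟨s(a, b), ⟨⟨hab, ?_⟩, hne⟩, rfl⟩
          intro w hw
          rcases Sym2.mem_iff.1 hw with rfl | rfl
          · exact hu
          · exact hv
        | none, some b =>
          exact Or.inr ⟨b, ⟨by simpa using (hnew b).1 heE, hv⟩, rfl⟩
        | some a, none =>
          exact Or.inr ⟨a, ⟨by simpa using (hnew a).1 heE.symm, hu⟩, Sym2.eq_swap⟩
        | none, none => exact absurd rfl heE.ne
    have htotal : {e ∈ G'.edgeSet | ∀ v ∈ e, v ∈ W}.ncard ≤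
        (E₀ \ {s(x, y)}).ncard + (({x, y, z} : Set V) ∩ W₀).ncard := by
      refine le_trans (Set.ncard_le_ncard hsub (Set.toFinite _))
        (le_trans (Set.ncard_union_le _ _) ?_)
      rw [Set.ncard_image_of_injective _ hinj, Set.ncard_image_of_injective _ hninj]
    have hk : (({x, y, z} : Set V) ∩ W₀).ncard ≤ W₀.ncard :=
      Set.ncard_le_ncard Set.inter_subset_right W₀.toFinite
    have he'le : (E₀ \ {s(x, y)}).ncard ≤ E₀.ncard :=
      Set.ncard_le_ncard Set.diff_subset (Set.toFinite _)
    rw [hcard]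
    have hc2 : 2 ≤ W₀.ncard + 1 := hcard ▸ hW
    by_cases h2 : 2 ≤ W₀.ncard
    · have he₀ : E₀.ncard ≤ 2 * W₀.ncard - 3 := hsparse W₀ h2
      by_cases hxyW : x ∈ W₀ ∧ y ∈ W₀
      · have hmem : s(x, y) ∈ E₀ := by
          refine ⟨hGxy, ?_⟩
          intro w hw
          rcases Sym2.mem_iff.1 hw with rfl | rfl
          · exact hxyW.1
          · exact hxyW.2
        have he' : (E₀ \ {s(x, y)}).ncard = E₀.ncard - 1 :=
          Set.ncard_diff_singleton_of_mem hmem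
        have hk3 : (({x, y, z} : Set V) ∩ W₀).ncard ≤ 3 :=
          h3 ▸ Set.ncard_le_ncard Set.inter_subset_left (Set.toFinite _)
        omega
      · have hk2 : (({x, y, z} : Set V) ∩ W₀).ncard ≤ 2 := by
          rcases not_and_or.1 hxyW with hnx' | hny'
          · have hsub2 : ({x, y, z} : Set V) ∩ W₀ ⊆ {y, z} := by
              rintro a ⟨ha3, haW⟩
              simp only [Set.mem_insert_iff, Set.mem_singleton_iff] at ha3 ⊢
              rcases ha3 with rfl | h
              · exact absurd haW hnx'
              · exact h
            exact le_trans (Set.ncard_le_ncard hsub2 (Set.toFinite _))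
              (le_trans (Set.ncard_insert_le _ _) (by simp))
          · have hsub2 : ({x, y, z} : Set V) ∩ W₀ ⊆ {x, z} := by
              rintro a ⟨ha3, haW⟩
              simp only [Set.mem_insert_iff, Set.mem_singleton_iff] at ha3 ⊢
              rcases ha3 with rfl | rfl | rfl
              · exact Or.inl rfl
              · exact absurd haW hny'
              · exact Or.inr rfl
            exact le_trans (Set.ncard_le_ncard hsub2 (Set.toFinite _))
              (le_trans (Set.ncard_insert_le _ _) (by simp))
        omega
    · have hempty : E₀ = ∅ := by
        by_contra hne
        exact h2 (two_le_of_edge (Set.nonempty_iff_ne_empty.2 hne))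
      have he'0 : (E₀ \ {s(x, y)}).ncard ≤ 0 := by
        rw [hempty]
        simp
      omega
  · -- `none ∉ W`
    have hWeq : W = some '' W₀ := by
      ext u
      match u with
      | none => simp [hnone]
      | some a => simp [hW₀def]
    have hcard : W.ncard = W₀.ncard := by
      rw [hWeq, Set.ncard_image_of_injective _ (Option.some_injective V)]
    have hsub : {e ∈ G'.edgeSet | ∀ v ∈ e, v ∈ W} ⊆
        Sym2.map some '' {e ∈ G.edgeSet | ∀ v ∈ e, v ∈ W₀} := by
      rintro e ⟨heE, heW⟩
      induction e using Sym2.inductionOn with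
      | hf u v =>
        rw [SimpleGraph.mem_edgeSet] at heE
        have hu : u ∈ W := heW u (Sym2.mem_mk_left u v)
        have hv : v ∈ W := heW v (Sym2.mem_mk_right u v)
        match u, v with
        | some a, some b =>
          refine ⟨s(a, b), ⟨((hold a b).1 heE).1, ?_⟩, rfl⟩
          intro w hw
          rcases Sym2.mem_iff.1 hw with rfl | rfl
          · exact hu
          · exact hv
        | none, some b => exact absurd hu hnone
        | some a, none => exact absurd hv hnone
        | none, none => exact absurd rfl heE.ne
    calc {e ∈ G'.edgeSet | ∀ v ∈ e, v ∈ W}.ncard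
        ≤ (Sym2.map some '' {e ∈ G.edgeSet | ∀ v ∈ e, v ∈ W₀}).ncard :=
          Set.ncard_le_ncard hsub (Set.toFinite _)
      _ = {e ∈ G.edgeSet | ∀ v ∈ e, v ∈ W₀}.ncard := Set.ncard_image_of_injective _ hinj
      _ ≤ 2 * W₀.ncard - 3 := hsparse W₀ (hcard ▸ hW)
      _ = 2 * W.ncard - 3 := by rw [hcard]
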